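/- The letter densities in the words y_n converge: lim_{n→∞} α_n/|y_n| = (3 − √5)/4 and lim_{n→∞} β_n/|y_n| = (√5 − 1)/4, where α_n and β_n are the number of occurrences of the letters 1 and 2 in y_n. -/

import Mathlib

/-- The words `y 0 = 01`, `y 1 = 02`, `y n = y (n-1) ++ y (n-2)` over `{0,1,2}`. -/
def yWord : ℕ → List ℕ
  | 0 => [0, 1]
  | 1 => [0, 2]
  | (n + 2) => yWord (n + 1) ++ yWord n

open Filter Real goldenRatio

lemma yWord_length : ∀ n, (yWord n).length = 2 * Nat.fib (n + 1)
  | 0 => rfl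
  | 1 => rfl
  | (n + 2) => by
      simp only [yWord, List.length_append, yWord_length (n + 1), yWord_length n,
        Nat.fib_add_two]
      ring

lemma yWord_count_two : ∀ n, (yWord n).count 2 = Nat.fib n
  | 0 => rfl
  | 1 => rfl
  | (n + 2) => by
      simp only [yWord, List.count_append, yWord_count_two (n + 1), yWord_count_two n,
        Nat.fib_add_two]
      ring

lemma yWord_count_one : ∀ n, (yWord (n + 1)).count 1 = Nat.fib n
  | 0 => rfl
  | 1 => rfl
  | (n + 2) => by
      show (yWord (n + 2) ++ yWord (n + 1)).count 1 = _
      simp only [List.count_append, yWord_count_one (n + 1), yWord_count_one n,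
        Nat.fib_add_two]
      ring

lemma fib_ratio_tendsto (k : ℕ) (hk : 1 ≤ k) :
    Tendsto (fun n => (Nat.fib n : ℝ) / (Nat.fib (n + k) : ℝ)) atTop (nhds ((φ ^ k)⁻¹)) := by
  have h5 : (0:ℝ) < √5 := Real.sqrt_pos.mpr (by norm_num)
  have hφ : (0:ℝ) < φ := goldenRatio_pos
  have hrabs : |ψ / φ| < 1 := by
    rw [abs_div, abs_of_pos hφ, div_lt_one hφ, abs_of_neg goldenConj_neg]
    nlinarith [goldenRatio_add_goldenConj, one_lt_goldenRatio]
  have hr0 : Tendsto (fun n => (ψ / φ) ^ n) atTop (nhds 0) :=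
    tendsto_pow_atTop_nhds_zero_of_abs_lt_one hrabs
  have hden : Tendsto (fun n => φ ^ k - ψ ^ k * (ψ / φ) ^ n) atTop (nhds (φ ^ k)) := by
    have := (tendsto_const_nhds (x := (φ:ℝ) ^ k) (f := atTop)).sub
      ((tendsto_const_nhds (x := (ψ:ℝ) ^ k) (f := atTop)).mul hr0)
    simpa using this
  have hnum : Tendsto (fun n => 1 - (ψ / φ) ^ n) atTop (nhds 1) := by
    have := (tendsto_const_nhds (x := (1:ℝ)) (f := atTop)).sub hr0
    simpa using this
  have hlim : Tendsto (fun n => (1 - (ψ / φ) ^ n) / (φ ^ k - ψ ^ k * (ψ / φ) ^ n))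
      atTop (nhds ((φ ^ k)⁻¹)) := by
    have := hnum.div hden (by positivity)
    simpa [one_div, Pi.div_def] using this
  refine hlim.congr fun n => ?_
  have hφn : (φ:ℝ) ^ n ≠ 0 := by positivity
  have e1 : (φ:ℝ) ^ n * (1 - (ψ / φ) ^ n) = √5 * (Nat.fib n : ℝ) := by
    rw [Real.coe_fib_eq, mul_div_cancel₀ _ (ne_of_gt h5), div_pow ψ φ n, mul_sub, mul_one,
      mul_div_cancel₀ _ hφn]
  have e2 : (φ:ℝ) ^ n * (φ ^ k - ψ ^ k * (ψ / φ) ^ n) = √5 * (Nat.fib (n + k) : ℝ) := by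
    rw [Real.coe_fib_eq, mul_div_cancel₀ _ (ne_of_gt h5), div_pow ψ φ n, pow_add φ n k,
      pow_add ψ n k, mul_sub, ← mul_assoc, mul_comm (φ ^ n) (ψ ^ k), mul_assoc,
      mul_div_cancel₀ _ hφn]
    ring
  calc (1 - (ψ / φ) ^ n) / (φ ^ k - ψ ^ k * (ψ / φ) ^ n)
      = φ ^ n * (1 - (ψ / φ) ^ n) / (φ ^ n * (φ ^ k - ψ ^ k * (ψ / φ) ^ n)) := by
        rw [mul_div_mul_left _ _ hφn]
    _ = √5 * (Nat.fib n : ℝ) / (√5 * (Nat.fib (n + k) : ℝ)) := by rw [e1, e2]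
    _ = (Nat.fib n : ℝ) / (Nat.fib (n + k) : ℝ) := by
        rw [mul_div_mul_left _ _ (ne_of_gt h5)]

theorem yWord_letter_densities :
    Filter.Tendsto (fun n => ((yWord n).count 1 : ℝ) / ((yWord n).length : ℝ))
        Filter.atTop (nhds ((3 - Real.sqrt 5) / 4)) ∧
      Filter.Tendsto (fun n => ((yWord n).count 2 : ℝ) / ((yWord n).length : ℝ))
        Filter.atTop (nhds ((Real.sqrt 5 - 1) / 4)) := by
  have h5 : √5 * √5 = 5 := Real.mul_self_sqrt (by norm_num)
  have h5pos : (0:ℝ) < √5 := Real.sqrt_pos.mpr (by norm_num)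
  have hgold : (φ:ℝ) = (1 + √5) / 2 := rfl
  constructor
  · have hval : (1/2 : ℝ) * (φ ^ 2)⁻¹ = (3 - √5) / 4 := by
      have hφ2 : (φ:ℝ) ^ 2 = (3 + √5) / 2 := by rw [goldenRatio_sq, hgold]; ring
      rw [hφ2, inv_div]
      have h3 : (0:ℝ) < 3 + √5 := by positivity
      field_simp
      linear_combination h5
    have key := (fib_ratio_tendsto 2 (by norm_num)).const_mul (1/2 : ℝ)
    rw [hval] at key
    rw [← Filter.tendsto_add_atTop_iff_nat 1]
    refine key.congr fun n => ?_
    rw [yWord_count_one, yWord_length]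
    have hpos : (0:ℝ) < (Nat.fib (n + 1 + 1) : ℝ) := by
      exact_mod_cast Nat.fib_pos.mpr (by omega)
    push_cast
    field_simp
  · have hval : (1/2 : ℝ) * (φ ^ 1)⁻¹ = (√5 - 1) / 4 := by
      rw [pow_one, hgold, inv_div]
      have h1 : (0:ℝ) < 1 + √5 := by positivity
      field_simp
      linear_combination -h5
    have key := (fib_ratio_tendsto 1 (by norm_num)).const_mul (1/2 : ℝ)
    rw [hval] at key
    refine key.congr fun n => ?_
    rw [yWord_count_two, yWord_length]
    have hpos : (0:ℝ) < (Nat.fib (n + 1) : ℝ) := by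
      exact_mod_cast Nat.fib_pos.mpr (by omega)
    push_cast
    field_simp
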